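/- Let G be a connected graph, S a minimal trivially perfect completion of G, H = G+S, and let L = (B, D) be a block of the universal clique decomposition of H. Let D_1, …, D_ℓ be the connected components of H[D] − B. Then for every i ∈ {1, …, ℓ}, the induced subgraph G[D_i] of the original graph G is connected. -/

import Mathlib

open SimpleGraph

universe u

/-- A graph is *trivially perfect* if it has no induced subgraph isomorphic to `C₄` or `P₄`. -/
def TriviallyPerfect {V : Type u} (G : SimpleGraph V) : Prop :=
  IsEmpty (SimpleGraph.cycleGraph 4 ↪g G) ∧ IsEmpty (SimpleGraph.pathGraph 4 ↪g G)

/-- A *universal clique decomposition* of a graph `G`: a finite rooted tree (modelled as a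
finite partial order in which the set of elements above any element is a chain and which has
a top element, the root) together with a partition of the vertices into nonempty bags such that
adjacent vertices lie in comparable nodes, and each bag is exactly the set of universal
vertices of the subgraph induced by the union of the bags in the subtree below it. -/
structure UCD {V : Type u} (G : SimpleGraph V) : Type (u + 1) where
  ι : Type u
  [po : PartialOrder ι]
  [ot : OrderTop ι]
  [fin : Fintype ι]
  bag : ι → Set V
  bag_nonempty : ∀ t, (bag t).Nonempty
  bag_disjoint : ∀ s t, s ≠ t → Disjoint (bag s) (bag t)
  bag_cover : ∀ v, ∃ t, v ∈ bag t
  up_chain : ∀ a b c : ι, a ≤ b → a ≤ c → b ≤ c ∨ c ≤ b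
  adj_comparable : ∀ v w s t, G.Adj v w → v ∈ bag t → w ∈ bag s → s ≤ t ∨ t ≤ s
  bag_eq_universal : ∀ t, bag t =
    {v | (∃ s ≤ t, v ∈ bag s) ∧ ∀ w, (∃ s ≤ t, w ∈ bag s) → w ≠ v → G.Adj v w}

attribute [instance] UCD.po UCD.ot UCD.fin

namespace UCD

variable {V : Type u} {G : SimpleGraph V} (U : UCD G)

/-- `D_t`: the union of the bags in the subtree rooted at `t`. -/
def subtreeSet (t : U.ι) : Set V := {v | ∃ s, s ≤ t ∧ v ∈ U.bag s}

/-- `Q_t`: the union of the bags on the path from `t` to the root. -/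
def tailSet (t : U.ι) : Set V := {v | ∃ s, t ≤ s ∧ v ∈ U.bag s}

/-- `t` is a leaf of the decomposition tree. -/
def IsLeaf (t : U.ι) : Prop := ∀ s : U.ι, s ≤ t → s = t

end UCD

/-- `G + S`: the graph obtained from `G` by adding the pairs in `S` as edges. -/
def completes {V : Type u} (G : SimpleGraph V) (S : Set (Sym2 V)) : SimpleGraph V :=
  G ⊔ SimpleGraph.fromEdgeSet S

/-- `S` is a set of non-edges of `G` (unordered pairs of distinct vertices, none an edge). -/
def IsCompletionSet {V : Type u} (G : SimpleGraph V) (S : Set (Sym2 V)) : Prop :=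
  (∀ e ∈ S, ¬ e.IsDiag) ∧ Disjoint S G.edgeSet

/-- `S` is a minimal trivially perfect completion of `G`. -/
def IsMinTPCompletion {V : Type u} (G : SimpleGraph V) (S : Set (Sym2 V)) : Prop :=
  IsCompletionSet G S ∧ TriviallyPerfect (completes G S) ∧
    ∀ S' ⊂ S, ¬ TriviallyPerfect (completes G S')

/-- A vital potential maximal clique of `(G, k)`. -/
def VitalPMC {V : Type u} (G : SimpleGraph V) (k : ℕ) (Ω : Set V) : Prop :=
  ∃ S, IsMinTPCompletion G S ∧ S.ncard ≤ k ∧ Maximal (completes G S).IsClique Ω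

/-! ### Auxiliary machinery -/

instance : DecidableRel (SimpleGraph.pathGraph 4).Adj :=
  fun _ _ => decidable_of_iff _ SimpleGraph.pathGraph_adj.symm

/-- A finite condition on labelings of the four vertices of a potential obstruction:
label `0` = in `X`, label `1` = in `Y`, label `2` = outside `D`. -/
def Cond4 (F : SimpleGraph (Fin 4)) [DecidableRel F.Adj] (σ : Fin 4 → Fin 3) : Prop :=
  (∃ i j, i ≠ j ∧ σ i = 0 ∧ σ j = 1) ∧
  (∀ i j, F.Adj i j → ¬(σ i = 0 ∧ σ j = 1)) ∧
  (∀ i j, F.Adj i j → σ i = 2 → σ j ≠ 2 → ∀ k, k ≠ i → σ k ≠ 2 → F.Adj i k) ∧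
  (∀ i j, i ≠ j → σ i = 2 → σ j = 2 → (∃ k, σ k ≠ 2 ∧ F.Adj i k) →
    (∃ k', σ k' ≠ 2 ∧ F.Adj j k') → F.Adj i j)

instance (F : SimpleGraph (Fin 4)) [DecidableRel F.Adj] (σ : Fin 4 → Fin 3) :
    Decidable (Cond4 F σ) := by
  unfold Cond4
  exact instDecidableAnd (dq := instDecidableAnd (dq := instDecidableAnd))

lemma cond4_cycle : ∀ σ : Fin 4 → Fin 3, ¬ Cond4 (SimpleGraph.cycleGraph 4) σ := by decide

lemma cond4_path : ∀ σ : Fin 4 → Fin 3, ¬ Cond4 (SimpleGraph.pathGraph 4) σ := by decide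

/-- Transfer absence of a four-vertex obstruction from `H` to `H'`, where `H'` is obtained from
`H` by deleting all edges between `X` and `Y`. -/
lemma transfer_isEmpty {V : Type u} (H H' : SimpleGraph V) (Dc X Y : Set V)
    (hUnion : X ∪ Y = Dc) (hdisj : Disjoint X Y)
    (hadj : ∀ x y : V, H'.Adj x y ↔ H.Adj x y ∧ ¬((x ∈ X ∧ y ∈ Y) ∨ (x ∈ Y ∧ y ∈ X)))
    (habove : ∀ w a, w ∉ Dc → a ∈ Dc → H.Adj w a → ∀ v ∈ Dc, H.Adj w v)
    (hclique : ∀ w1 w2 a1 a2, w1 ∉ Dc → w2 ∉ Dc → a1 ∈ Dc → a2 ∈ Dc →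
      H.Adj w1 a1 → H.Adj w2 a2 → w1 ≠ w2 → H.Adj w1 w2)
    (F : SimpleGraph (Fin 4)) [DecidableRel F.Adj]
    (hF : ∀ σ : Fin 4 → Fin 3, ¬ Cond4 F σ)
    (hH : IsEmpty (F ↪g H)) : IsEmpty (F ↪g H') := by
  classical
  constructor
  intro f
  by_cases hc : ∃ x y, H.Adj (f x) (f y) ∧ ((f x ∈ X ∧ f y ∈ Y) ∨ (f x ∈ Y ∧ f y ∈ X))
  · -- there is a deleted pair among the images: use the finite condition
    have hmemX : ∀ i : Fin 4, f i ∈ X → f i ∈ Dc := fun i hi => hUnion ▸ Set.mem_union_left _ hi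
    have hmemY : ∀ i : Fin 4, f i ∈ Y → f i ∈ Dc := fun i hi => hUnion ▸ Set.mem_union_right _ hi
    obtain ⟨x0, y0, hxy0, hcross0⟩ := hc
    -- normalize so that `f i0 ∈ X` and `f j0 ∈ Y`
    obtain ⟨i0, j0, hi0, hj0⟩ :
        ∃ i0 j0 : Fin 4, f i0 ∈ X ∧ f j0 ∈ Y := by
      rcases hcross0 with ⟨h1, h2⟩ | ⟨h1, h2⟩
      · exact ⟨x0, y0, h1, h2⟩
      · exact ⟨y0, x0, h2, h1⟩
    set σ : Fin 4 → Fin 3 := fun i => if f i ∈ X then 0 else if f i ∈ Y then 1 else 2 with hσ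
    have hσ0 : ∀ i, σ i = 0 → f i ∈ X := by
      intro i h
      by_contra hx
      by_cases hy : f i ∈ Y <;> simp [hσ, hx, hy] at h
    have hσ1 : ∀ i, σ i = 1 → f i ∈ Y := by
      intro i h
      by_cases hx : f i ∈ X
      · simp [hσ, hx] at h
      · by_contra hy; simp [hσ, hx, hy] at h
    have hσ2 : ∀ i, σ i = 2 → f i ∉ Dc := by
      intro i h
      by_cases hx : f i ∈ X
      · simp [hσ, hx] at h
      · by_cases hy : f i ∈ Y
        · simp [hσ, hx, hy] at h
        · intro hD
          rw [← hUnion] at hD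
          rcases hD with hD | hD
          · exact hx hD
          · exact hy hD
    have hσne2 : ∀ i, σ i ≠ 2 → f i ∈ Dc := by
      intro i h
      by_cases hx : f i ∈ X
      · exact hmemX i hx
      · by_cases hy : f i ∈ Y
        · exact hmemY i hy
        · simp [hσ, hx, hy] at h
    refine hF σ ⟨⟨i0, j0, ?_, ?_, ?_⟩, ?_, ?_, ?_⟩
    · intro h
      exact hdisj.ne_of_mem hi0 hj0 (by rw [h])
    · simp [hσ, hi0]
    · have : f j0 ∉ X := fun h => hdisj.ne_of_mem h hj0 rfl
      simp [hσ, this, hj0]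
    · rintro i j hFij ⟨h0, h1⟩
      have h' : H'.Adj (f i) (f j) := f.map_adj_iff.mpr hFij
      exact ((hadj _ _).mp h').2 (Or.inl ⟨hσ0 i h0, hσ1 j h1⟩)
    · intro i j hFij h2 hj2 k hk hk2
      have h' : H'.Adj (f i) (f j) := f.map_adj_iff.mpr hFij
      have hHij : H.Adj (f i) (f j) := ((hadj _ _).mp h').1
      have hfiD : f i ∉ Dc := hσ2 i h2
      have hik : H.Adj (f i) (f k) := habove _ _ hfiD (hσne2 j hj2) hHij _ (hσne2 k hk2)
      have hnx : f i ∉ X := fun h => hfiD (hmemX i h)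
      have hny : f i ∉ Y := fun h => hfiD (hmemY i h)
      have : H'.Adj (f i) (f k) := (hadj _ _).mpr ⟨hik, by
        rintro (⟨h1, _⟩ | ⟨h1, _⟩)
        · exact hnx h1
        · exact hny h1⟩
      exact f.map_adj_iff.mp this
    · rintro i j hij h2i h2j ⟨k, hk2, hFik⟩ ⟨k', hk'2, hFjk'⟩
      have hHik : H.Adj (f i) (f k) := ((hadj _ _).mp (f.map_adj_iff.mpr hFik)).1
      have hHjk' : H.Adj (f j) (f k')  := ((hadj _ _).mp (f.map_adj_iff.mpr hFjk')).1
      have hfiD : f i ∉ Dc := hσ2 i h2i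
      have hfjD : f j ∉ Dc := hσ2 j h2j
      have hHij : H.Adj (f i) (f j) :=
        hclique _ _ _ _ hfiD hfjD (hσne2 k hk2) (hσne2 k' hk'2) hHik hHjk'
          (fun h => hij (f.injective h))
      have hnx : f i ∉ X := fun h => hfiD (hmemX i h)
      have hny : f i ∉ Y := fun h => hfiD (hmemY i h)
      have : H'.Adj (f i) (f j) := (hadj _ _).mpr ⟨hHij, by
        rintro (⟨h1, _⟩ | ⟨h1, _⟩)
        · exact hnx h1
        · exact hny h1⟩
      exact f.map_adj_iff.mp this
  · -- no deleted pair among the images: `f` is an embedding into `H`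
    push_neg at hc
    refine hH.elim ⟨f.toEmbedding, ?_⟩
    intro a b
    constructor
    · intro h
      refine f.map_adj_iff.mp ((hadj _ _).mpr ⟨h, ?_⟩)
      rintro (⟨h1, h2⟩ | ⟨h1, h2⟩)
      · exact (hc a b h).1 h1 h2
      · exact (hc a b h).2 h1 h2
    · intro h
      exact ((hadj _ _).mp (f.map_adj_iff.mpr h)).1

theorem minTPCompletion_block_components_connected_in_G {V : Type u} [Fintype V]
    (G : SimpleGraph V) (hG : G.Connected) (S : Set (Sym2 V)) (hS : IsMinTPCompletion G S)
    (U : UCD (completes G S)) (t : U.ι)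
    (c : ((completes G S).induce (U.subtreeSet t \ U.bag t)).ConnectedComponent) :
    (G.induce (Subtype.val '' c.supp)).Connected := by
  classical
  by_contra hnc
  obtain ⟨hCS, hTP, hmin⟩ := hS
  set Dc : Set V := Subtype.val '' c.supp with hDcdef
  have hHadj : ∀ x y : V, (completes G S).Adj x y ↔ (G.Adj x y ∨ (s(x, y) ∈ S ∧ x ≠ y)) := by
    intro x y
    simp [completes, SimpleGraph.fromEdgeSet_adj]
  have hDcDB : Dc ⊆ (U.subtreeSet t \ U.bag t) := by rintro x ⟨u, hu, rfl⟩; exact u.2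
  have hDBD : (U.subtreeSet t \ U.bag t) ⊆ U.subtreeSet t := Set.diff_subset
  -- closure of the component under adjacency within `(U.subtreeSet t \ U.bag t)`
  have h3 : ∀ x y : V, x ∈ Dc → y ∈ (U.subtreeSet t \ U.bag t) → (completes G S).Adj x y → y ∈ Dc := by
    rintro x y ⟨p, hp, rfl⟩ hy hadj
    refine ⟨⟨y, hy⟩, ?_, rfl⟩
    rw [SimpleGraph.ConnectedComponent.mem_supp_iff] at hp ⊢
    rw [← hp]
    exact SimpleGraph.ConnectedComponent.sound
      (SimpleGraph.Adj.reachable (by exact hadj.symm))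
  -- key UCD lemmas
  have lemA : ∀ w a : V, w ∉ Dc → a ∈ Dc → (completes G S).Adj w a →
      ∃ s, t ≤ s ∧ w ∈ U.bag s := by
    intro w a hw ha hadj
    obtain ⟨sw, hsw⟩ := U.bag_cover w
    obtain ⟨sa, hsa, hab⟩ : a ∈ U.subtreeSet t := hDBD (hDcDB ha)
    by_cases hle : sw ≤ t
    · rcases eq_or_ne sw t with rfl | hne
      · exact ⟨sw, le_rfl, hsw⟩
      · exfalso
        have hwDB : w ∈ (U.subtreeSet t \ U.bag t) :=
          ⟨⟨sw, hle, hsw⟩, fun hBt => (U.bag_disjoint sw t hne).ne_of_mem hsw hBt rfl⟩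
        exact hw (h3 a w ha hwDB hadj.symm)
    · rcases U.adj_comparable w a sa sw hadj hsw hab with h | h
      · rcases U.up_chain sa t sw hsa h with h' | h'
        · exact ⟨sw, h', hsw⟩
        · exact absurd h' hle
      · exact absurd (h.trans hsa) hle
  have lemB : ∀ (s sv : U.ι) (w v : V), w ∈ U.bag s → v ∈ U.bag sv → sv ≤ s → v ≠ w →
      (completes G S).Adj w v := by
    intro s sv w v hw hv hle hne
    rw [U.bag_eq_universal s] at hw
    exact hw.2 v ⟨sv, hle, hv⟩ hne
  have habove : ∀ w a : V, w ∉ Dc → a ∈ Dc → (completes G S).Adj w a →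
      ∀ v ∈ Dc, (completes G S).Adj w v := by
    intro w a hw ha hadj v hv
    obtain ⟨s, hts, hws⟩ := lemA w a hw ha hadj
    obtain ⟨sv, hsv, hvb⟩ : v ∈ U.subtreeSet t := hDBD (hDcDB hv)
    exact lemB s sv w v hws hvb (hsv.trans hts) (fun h => hw (h ▸ hv))
  have hclique : ∀ w1 w2 a1 a2 : V, w1 ∉ Dc → w2 ∉ Dc → a1 ∈ Dc → a2 ∈ Dc →
      (completes G S).Adj w1 a1 → (completes G S).Adj w2 a2 → w1 ≠ w2 →
      (completes G S).Adj w1 w2 := by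
    intro w1 w2 a1 a2 h1 h2 ha1 ha2 hadj1 hadj2 hne
    obtain ⟨s1, ht1, hb1⟩ := lemA w1 a1 h1 ha1 hadj1
    obtain ⟨s2, ht2, hb2⟩ := lemA w2 a2 h2 ha2 hadj2
    rcases U.up_chain t s1 s2 ht1 ht2 with h | h
    · exact (lemB s2 s1 w2 w1 hb2 hb1 h hne).symm
    · exact lemB s1 s2 w1 w2 hb1 hb2 h hne.symm
  have hneDc : Dc.Nonempty := by
    obtain ⟨p0, hp0⟩ := c.exists_rep
    exact ⟨p0.1, p0, (SimpleGraph.ConnectedComponent.mem_supp_iff c p0).mpr hp0, rfl⟩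
  rw [connected_iff] at hnc
  push_neg at hnc
  have hNE : Nonempty ↥Dc := ⟨⟨hneDc.choose, hneDc.choose_spec⟩⟩
  have hnp : ¬ (G.induce Dc).Preconnected := fun h => (hnc h).false hNE.some
  unfold SimpleGraph.Preconnected at hnp
  push_neg at hnp
  obtain ⟨u, v, huv⟩ := hnp
  set X : Set V := {x : V | ∃ hx : x ∈ Dc, (G.induce Dc).Reachable u ⟨x, hx⟩} with hXdef
  set Y : Set V := Dc \ X with hYdef
  have hXsub : X ⊆ Dc := fun x hx => hx.1
  have hUnion : X ∪ Y = Dc := Set.union_diff_cancel hXsub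
  have hdisj : Disjoint X Y := Set.disjoint_sdiff_right
  have huX : (u : V) ∈ X := ⟨u.2, SimpleGraph.Reachable.refl u⟩
  have hvY : (v : V) ∈ Y := ⟨v.2, fun hv => huv hv.2⟩
  have hGcross : ∀ x y : V, x ∈ X → y ∈ Y → ¬ G.Adj x y := by
    rintro x y ⟨hx, hr⟩ hy hadj
    exact hy.2 ⟨hy.1, hr.trans (SimpleGraph.Adj.reachable (by exact hadj))⟩
  set Cross : Set (Sym2 V) := {e | ∃ a ∈ X, ∃ b ∈ Y, e = s(a, b)} with hCrossdef
  set S' : Set (Sym2 V) := S \ Cross with hS'def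
  have hcross_iff : ∀ x y : V, s(x, y) ∈ Cross ↔
      ((x ∈ X ∧ y ∈ Y) ∨ (x ∈ Y ∧ y ∈ X)) := by
    intro x y
    constructor
    · rintro ⟨a, ha, b, hb, he⟩
      rcases Sym2.eq_iff.mp he with ⟨rfl, rfl⟩ | ⟨rfl, rfl⟩
      · exact Or.inl ⟨ha, hb⟩
      · exact Or.inr ⟨hb, ha⟩
    · rintro (⟨hx, hy⟩ | ⟨hx, hy⟩)
      · exact ⟨x, hx, y, hy, rfl⟩
      · exact ⟨y, hy, x, hx, Sym2.eq_swap.symm⟩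
  have hadj' : ∀ x y : V, (completes G S').Adj x y ↔ (completes G S).Adj x y ∧
      ¬((x ∈ X ∧ y ∈ Y) ∨ (x ∈ Y ∧ y ∈ X)) := by
    intro x y
    have hS'adj : (completes G S').Adj x y ↔ (G.Adj x y ∨ (s(x, y) ∈ S' ∧ x ≠ y)) := by
      simp [completes, SimpleGraph.fromEdgeSet_adj]
    rw [hS'adj, hHadj]
    constructor
    · rintro (hg | ⟨hs, hne⟩)
      · refine ⟨Or.inl hg, ?_⟩
        rintro (⟨hx, hy⟩ | ⟨hx, hy⟩)
        · exact hGcross x y hx hy hg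
        · exact hGcross y x hy hx hg.symm
      · exact ⟨Or.inr ⟨hs.1, hne⟩, fun hc => hs.2 ((hcross_iff x y).mpr hc)⟩
    · rintro ⟨(hg | ⟨hs, hne⟩), hncr⟩
      · exact Or.inl hg
      · exact Or.inr ⟨⟨hs, fun hc => hncr ((hcross_iff x y).mp hc)⟩, hne⟩
  -- find an `H`-edge between `X` and `Y`
  have walkcross : ∀ (p q : ↥(U.subtreeSet t \ U.bag t)) (w : ((completes G S).induce (U.subtreeSet t \ U.bag t)).Walk p q),
      (p : V) ∈ X → (q : V) ∈ Y → (p : V) ∈ Dc →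
      ∃ a ∈ X, ∃ b ∈ Y, (completes G S).Adj a b := by
    intro p q w
    induction w with
    | nil =>
      intro hp hq _
      exact absurd rfl (hdisj.ne_of_mem hp hq)
    | @cons p r q h w ih =>
      intro hp hq hpD
      have hrD : (r : V) ∈ Dc := h3 p r hpD r.2 (by exact h)
      by_cases hrX : (r : V) ∈ X
      · exact ih hrX hq hrD
      · exact ⟨p, hp, r, ⟨hrD, hrX⟩, by exact h⟩
  obtain ⟨u0, hu0, hu0e⟩ := u.2
  obtain ⟨v0, hv0, hv0e⟩ := v.2
  have hreach : ((completes G S).induce (U.subtreeSet t \ U.bag t)).Reachable u0 v0 := by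
    rw [SimpleGraph.ConnectedComponent.mem_supp_iff] at hu0 hv0
    exact SimpleGraph.ConnectedComponent.exact (hu0.trans hv0.symm)
  obtain ⟨w⟩ := hreach
  obtain ⟨a, haX, b, hbY, hab⟩ :=
    walkcross u0 v0 w (by rw [hu0e]; exact huX) (by rw [hv0e]; exact hvY)
      (by rw [hu0e]; exact u.2)
  have hsab : s(a, b) ∈ S := by
    rcases (hHadj a b).mp hab with hg | ⟨hs, _⟩
    · exact absurd hg (hGcross a b haX hbY)
    · exact hs
  have hSS' : S' ⊂ S := by
    refine (Set.ssubset_iff_of_subset Set.diff_subset).mpr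
      ⟨s(a, b), hsab, fun h => h.2 ⟨a, haX, b, hbY, rfl⟩⟩
  refine hmin S' hSS' ⟨?_, ?_⟩
  · exact transfer_isEmpty (completes G S) (completes G S') Dc X Y hUnion hdisj hadj'
      habove hclique _ cond4_cycle hTP.1
  · exact transfer_isEmpty (completes G S) (completes G S') Dc X Y hUnion hdisj hadj'
      habove hclique _ cond4_path hTP.2
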